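/- Let M be a nondeterministic finite automaton with a finite state type whose accepted language L(M) is a finite set. Then every accepting run of M (on any word) visits pairwise distinct states; consequently, for every c ≥ 1, the SSB(c)-language of M (the set of words having an accepting run in which each state occurs at most c times) equals L(M). -/

import Mathlib

/-- `RunFrom M q w ps` means: starting in state `q`, the list of states `ps` is a run of
`M` on the word `w` ending in an accepting state. -/
def RunFrom {α σ : Type*} (M : NFA α σ) : σ → List α → List σ → Prop
  | q, [], [] => q ∈ M.accept
  | q, a :: w, p :: ps => p ∈ M.step q a ∧ RunFrom M p w ps
  | _, _ :: _, [] => False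
  | _, [], _ :: _ => False

/-- `ps` is an accepting run of `M` on the word `w`: it is a list of states
`p₀, …, p_L` (`L = |w|`) with `p₀ ∈ M.start`, consecutive states related by `M.step`
along the letters of `w`, and the last state accepting. -/
def IsAcceptingRun {α σ : Type*} (M : NFA α σ) (w : List α) (ps : List σ) : Prop :=
  ∃ p rest, ps = p :: rest ∧ p ∈ M.start ∧ RunFrom M p w rest

open scoped Classical in
/-- The SSB(c)-language of `M`: words having an accepting run in which each state
occurs at most `c` times. -/
noncomputable def SSBLang {α σ : Type*} (M : NFA α σ) (c : ℕ) : Language α :=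
  {w | ∃ ps, IsAcceptingRun M w ps ∧ ∀ q : σ, ps.count q ≤ c}

namespace SSBAux

variable {α σ : Type*} (M : NFA α σ)

theorem evalFrom_cons (S : Set σ) (a : α) (w : List α) :
    M.evalFrom S (a :: w) = M.evalFrom (M.stepSet S a) w := rfl

theorem evalFrom_append (S : Set σ) (u v : List α) :
    M.evalFrom S (u ++ v) = M.evalFrom (M.evalFrom S u) v := by
  simp [NFA.evalFrom, List.foldl_append]

theorem evalFrom_mono {S T : Set σ} (h : S ⊆ T) :
    ∀ w, M.evalFrom S w ⊆ M.evalFrom T w := by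
  intro w
  induction w generalizing S T with
  | nil => simpa using h
  | cons a w ih =>
    rw [evalFrom_cons, evalFrom_cons]
    apply ih
    intro s hs
    rw [NFA.mem_stepSet] at hs ⊢
    obtain ⟨t, ht, hst⟩ := hs
    exact ⟨t, h ht, hst⟩

theorem step_evalFrom {p q : σ} {a : α} {u : List α} {s : σ}
    (hp : p ∈ M.step q a) (hs : s ∈ M.evalFrom {p} u) :
    s ∈ M.evalFrom {q} (a :: u) := by
  rw [evalFrom_cons]
  refine evalFrom_mono M ?_ u hs
  intro x hx
  rw [Set.mem_singleton_iff] at hx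
  subst hx
  rw [NFA.mem_stepSet]
  exact ⟨q, rfl, hp⟩

theorem runFrom_exists_accept :
    ∀ (w : List α) (q : σ) (ps : List σ), RunFrom M q w ps →
      ∃ p ∈ M.accept, p ∈ M.evalFrom {q} w := by
  intro w
  induction w with
  | nil =>
    intro q ps h
    cases ps with
    | nil => exact ⟨q, h, by simp [NFA.evalFrom]⟩
    | cons p ps => exact absurd h (by simp [RunFrom])
  | cons a w ih =>
    intro q ps h
    cases ps with
    | nil => exact absurd h (by simp [RunFrom])
    | cons p ps =>
      obtain ⟨hstep, hrun⟩ := h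
      obtain ⟨r, hr, hrm⟩ := ih p ps hrun
      exact ⟨r, hr, step_evalFrom M hstep hrm⟩

theorem exists_run :
    ∀ (w : List α) (S : Set σ) (p : σ), p ∈ M.evalFrom S w → p ∈ M.accept →
      ∃ q ∈ S, ∃ ps, RunFrom M q w ps := by
  intro w
  induction w with
  | nil =>
    intro S p hp hacc
    exact ⟨p, by simpa [NFA.evalFrom] using hp, [], hacc⟩
  | cons a w ih =>
    intro S p hp hacc
    rw [evalFrom_cons] at hp
    obtain ⟨q', hq', ps, hps⟩ := ih (M.stepSet S a) p hp hacc
    rw [NFA.mem_stepSet] at hq'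
    obtain ⟨q, hq, hstep⟩ := hq'
    exact ⟨q, hq, q' :: ps, hstep, hps⟩

theorem runFrom_mem_split :
    ∀ (w : List α) (r : σ) (ps : List σ), RunFrom M r w ps → ∀ s ∈ ps,
      ∃ v x ps', w = v ++ x ∧ v ≠ [] ∧ s ∈ M.evalFrom {r} v ∧ RunFrom M s x ps' := by
  intro w
  induction w with
  | nil =>
    intro r ps h s hs
    cases ps with
    | nil => simp at hs
    | cons p ps => exact absurd h (by simp [RunFrom])
  | cons a w ih =>
    intro r ps h s hs
    cases ps with
    | nil => exact absurd h (by simp [RunFrom])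
    | cons p ps =>
      obtain ⟨hstep, hrun⟩ := h
      rcases List.mem_cons.1 hs with rfl | hs'
      · refine ⟨[a], w, ps, rfl, by simp, ?_, hrun⟩
        rw [NFA.evalFrom_singleton, NFA.mem_stepSet]
        exact ⟨r, rfl, hstep⟩
      · obtain ⟨v, x, ps', hw, hv, hsv, hrun'⟩ := ih p ps hrun s hs'
        exact ⟨a :: v, x, ps', by simp [hw], by simp,
          step_evalFrom M hstep hsv, hrun'⟩

theorem loop_of_not_nodup :
    ∀ (w : List α) (q : σ) (ps : List σ), RunFrom M q w ps → ¬ (q :: ps).Nodup →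
      ∃ u v x p, w = u ++ v ++ x ∧ v ≠ [] ∧ p ∈ M.evalFrom {q} u ∧
        p ∈ M.evalFrom {p} v ∧ ∃ ps', RunFrom M p x ps' := by
  intro w
  induction w with
  | nil =>
    intro q ps h hnd
    cases ps with
    | nil => simp at hnd
    | cons p ps => exact absurd h (by simp [RunFrom])
  | cons a w ih =>
    intro q ps h hnd
    cases ps with
    | nil => exact absurd h (by simp [RunFrom])
    | cons p ps =>
      obtain ⟨hstep, hrun⟩ := h
      by_cases hq : q ∈ p :: ps
      · rcases List.mem_cons.1 hq with rfl | hq'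
        · refine ⟨[], [a], w, q, rfl, by simp, by simp [NFA.evalFrom], ?_, ps, hrun⟩
          rw [NFA.evalFrom_singleton, NFA.mem_stepSet]
          exact ⟨q, rfl, hstep⟩
        · obtain ⟨v, x, ps', hw, hv, hsv, hrun'⟩ :=
            runFrom_mem_split M w p ps hrun q hq'
          exact ⟨[], a :: v, x, q, by simp [hw], by simp,
            by simp [NFA.evalFrom], step_evalFrom M hstep hsv, ps', hrun'⟩
      · have hnd' : ¬ (p :: ps).Nodup := by
          intro hcon
          exact hnd (List.nodup_cons.2 ⟨hq, hcon⟩)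
        obtain ⟨u, v, x, p₀, hw, hv, hpu, hloop, hrest⟩ := ih p ps hrun hnd'
        exact ⟨a :: u, v, x, p₀, by simp [hw], hv,
          step_evalFrom M hstep hpu, hloop, hrest⟩

theorem loop_pump {p : σ} {v : List α} (h : p ∈ M.evalFrom {p} v) :
    ∀ n, p ∈ M.evalFrom {p} ((List.replicate n v).flatten) := by
  intro n
  induction n with
  | zero => simp [NFA.evalFrom]
  | succ n ihn =>
    rw [List.replicate_succ, List.flatten_cons, evalFrom_append]
    exact evalFrom_mono M (Set.singleton_subset_iff.2 h) _ ihn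

theorem accepts_infinite {q p : σ} {u v x : List α}
    (hq : q ∈ M.start) (hu : p ∈ M.evalFrom {q} u) (hv : v ≠ [])
    (hloop : p ∈ M.evalFrom {p} v) {ps : List σ} (hx : RunFrom M p x ps) :
    (M.accepts : Set (List α)).Infinite := by
  obtain ⟨r, hracc, hrx⟩ := runFrom_exists_accept M x p ps hx
  have hvlen : 0 < v.length := List.length_pos_iff.2 hv
  refine Set.infinite_of_injective_forall_mem
    (f := fun n : ℕ => u ++ (List.replicate n v).flatten ++ x) ?_ ?_
  · intro m n hmn
    have hlen := congrArg List.length hmn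
    simp only [List.length_append, List.length_flatten, List.map_replicate,
      List.sum_replicate, smul_eq_mul] at hlen
    have h1 := Nat.add_right_cancel hlen
    have h2 := Nat.add_left_cancel h1
    exact Nat.eq_of_mul_eq_mul_right hvlen h2
  · intro n
    apply NFA.mem_accepts.2
    refine ⟨r, hracc, ?_⟩
    have h1 : p ∈ M.evalFrom M.start u :=
      evalFrom_mono M (Set.singleton_subset_iff.2 hq) u hu
    have h2 : p ∈ M.evalFrom M.start (u ++ (List.replicate n v).flatten) := by
      rw [evalFrom_append]
      exact evalFrom_mono M (Set.singleton_subset_iff.2 h1) _ (loop_pump M hloop n)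
    show r ∈ M.evalFrom M.start _
    rw [evalFrom_append]
    exact evalFrom_mono M (Set.singleton_subset_iff.2 h2) _ hrx

end SSBAux

/-- If an NFA with finite state type accepts a finite language, then every accepting run
visits pairwise distinct states; consequently for every `c ≥ 1` the SSB(c)-language of
`M` equals `L(M)`. -/
theorem ssb_language_eq_of_finite_language
    {α : Type*} {σ : Type*} [Fintype σ] (M : NFA α σ)
    (hfin : Set.Finite (M.accepts : Set (List α))) :
    (∀ (w : List α) (ps : List σ), IsAcceptingRun M w ps → ps.Nodup) ∧
    (∀ c : ℕ, 1 ≤ c → SSBLang M c = M.accepts) := by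
  classical
  have hnodup : ∀ (w : List α) (ps : List σ), IsAcceptingRun M w ps → ps.Nodup := by
    rintro w ps ⟨q, rest, rfl, hq, hrun⟩
    by_contra hnd
    obtain ⟨u, v, x, p, hw, hv, hpu, hloop, ps', hrun'⟩ :=
      SSBAux.loop_of_not_nodup M w q rest hrun hnd
    exact (SSBAux.accepts_infinite M hq hpu hv hloop hrun') hfin
  refine ⟨hnodup, ?_⟩
  intro c hc
  ext w
  simp only [SSBLang, Set.mem_setOf_eq]
  constructor
  · rintro ⟨ps, ⟨q, rest, rfl, hq, hrun⟩, -⟩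
    obtain ⟨r, hr, hrm⟩ := SSBAux.runFrom_exists_accept M w q rest hrun
    rw [NFA.mem_accepts]
    exact ⟨r, hr, SSBAux.evalFrom_mono M (Set.singleton_subset_iff.2 hq) w hrm⟩
  · intro hw
    rw [NFA.mem_accepts] at hw
    obtain ⟨r, hr, hrm⟩ := hw
    obtain ⟨q, hq, ps, hps⟩ := SSBAux.exists_run M w M.start r hrm hr
    have hacc : IsAcceptingRun M w (q :: ps) := ⟨q, ps, rfl, hq, hps⟩
    refine ⟨q :: ps, hacc, fun s => ?_⟩
    exact le_trans (List.nodup_iff_count_le_one.1 (hnodup w _ hacc) s) hc
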